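/- Let G be a finite simple graph that is not (3,4)-colorable, let v be a vertex of G with deg(v) ∈ {6, 7, 8}, and let c be a (3,4)-coloring of G − v. Then v has a neighbor u in G such that u is saturated under c and u is either a vertex of degree at least 9, or a vertex of degree at least 5 with at least two 3^+-neighbors. -/

import Mathlib

/-- The degree of a vertex: the number of its neighbors. -/
noncomputable def degN {V : Type*} (G : SimpleGraph V) (v : V) : ℕ :=
  {w | G.Adj v w}.ncard

/-- `c` is a (3,4)-coloring of `G`: every vertex gets value 3 or 4, and every
vertex with value `i` has at most `i` neighbors with value `i`. -/
def IsColoring34 {V : Type*} (G : SimpleGraph V) (c : V → ℕ) : Prop :=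
  (∀ v, c v = 3 ∨ c v = 4) ∧ ∀ v, {w | G.Adj v w ∧ c w = c v}.ncard ≤ c v

/-- `G` is (3,4)-colorable. -/
def Colorable34 {V : Type*} (G : SimpleGraph V) : Prop :=
  ∃ c, IsColoring34 G c

/-- The graph `G − v` obtained by deleting the vertex `v` and its incident edges
(keeping `v` as an isolated vertex, which does not affect (3,4)-colorability). -/
def deleteVert {V : Type*} (G : SimpleGraph V) (v : V) : SimpleGraph V where
  Adj a b := G.Adj a b ∧ a ≠ v ∧ b ≠ v
  symm := ⟨fun _ _ ⟨h, ha, hb⟩ => ⟨h.symm, hb, ha⟩⟩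
  loopless := ⟨fun a ⟨h, _, _⟩ => G.loopless.irrefl a h⟩

/-- `G` is minimally non-(3,4)-colorable. -/
def MinNonColorable34 {V : Type*} (G : SimpleGraph V) : Prop :=
  ¬ Colorable34 G ∧ (∀ v, Colorable34 (deleteVert G v)) ∧
    ∀ e ∈ G.edgeSet, Colorable34 (G.deleteEdges {e})

/-- `u` is `i`-saturated under the coloring `c` of the graph `G`. -/
def Saturated34 {V : Type*} (G : SimpleGraph V) (c : V → ℕ) (i : ℕ) (u : V) : Prop :=
  c u = i ∧ {w | G.Adj u w ∧ c w = i}.ncard = i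

/-- `u` can be recolored: changing the color of `u` to the other color
(`7 - c u` swaps 3 and 4) again yields a (3,4)-coloring of `G`. -/
def Recolorable34 {V : Type*} [DecidableEq V] (G : SimpleGraph V) (c : V → ℕ) (u : V) : Prop :=
  IsColoring34 G (Function.update c u (7 - c u))

/-- The number of 3^+-neighbors of `x` in `G` (neighbors of degree at least 3). -/
noncomputable def tpn {V : Type*} (G : SimpleGraph V) (x : V) : ℕ :=
  {w | G.Adj x w ∧ 3 ≤ degN G w}.ncard

/-- A 5p-vertex (poor 5-vertex): degree 5 with exactly one 3^+-neighbor. -/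
def Is5p {V : Type*} (G : SimpleGraph V) (x : V) : Prop := degN G x = 5 ∧ tpn G x = 1

/-- A 5s-vertex (semi-poor 5-vertex): degree 5 with exactly two 3^+-neighbors. -/
def Is5s {V : Type*} (G : SimpleGraph V) (x : V) : Prop := degN G x = 5 ∧ tpn G x = 2

/-- A 6p-vertex (poor 6-vertex): degree 6 with exactly one 3^+-neighbor. -/
def Is6p {V : Type*} (G : SimpleGraph V) (x : V) : Prop := degN G x = 6 ∧ tpn G x = 1

/-- `G` has girth at least 5: no 3-cycles and no 4-cycles. -/
def GirthAtLeast5 {V : Type*} (G : SimpleGraph V) : Prop :=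
  (∀ a b c : V, G.Adj a b → G.Adj b c → ¬ G.Adj c a) ∧
  (∀ a b c d : V, a ≠ c → b ≠ d →
    G.Adj a b → G.Adj b c → G.Adj c d → ¬ G.Adj d a)


section Stmt7Helpers

variable {V : Type*} [Fintype V]

private lemma ncard_del_le_degN (G : SimpleGraph V) (v x : V) (P : V → Prop) :
    {w | (deleteVert G v).Adj x w ∧ P w}.ncard ≤ degN G x :=
  Set.ncard_le_ncard (fun w hw => hw.1.1) (Set.toFinite _)

private lemma count_split {c : V → ℕ} (hcol : ∀ w, c w = 3 ∨ c w = 4) (P : V → Prop) :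
    {w | P w ∧ c w = 3}.ncard + {w | P w ∧ c w = 4}.ncard = {w | P w}.ncard := by
  rw [← Set.ncard_union_eq ?disj (Set.toFinite _) (Set.toFinite _)]
  case disj =>
    rw [Set.disjoint_left]
    rintro w ⟨_, h3⟩ ⟨_, h4⟩
    omega
  congr 1
  ext w
  simp only [Set.mem_union, Set.mem_setOf_eq]
  constructor
  · rintro (⟨h, _⟩ | ⟨h, _⟩) <;> exact h
  · intro h
    rcases hcol w with h3 | h4
    · exact Or.inl ⟨h, h3⟩
    · exact Or.inr ⟨h, h4⟩

private lemma degbound {G : SimpleGraph V} {v u : V} (huv : G.Adj u v) :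
    {w | (deleteVert G v).Adj u w}.ncard + 1 ≤ degN G u := by
  have hvnot : v ∉ {w | (deleteVert G v).Adj u w} := fun h => h.2.2 rfl
  have hins : (insert v {w | (deleteVert G v).Adj u w}).ncard
      = {w | (deleteVert G v).Adj u w}.ncard + 1 :=
    Set.ncard_insert_of_notMem hvnot (Set.toFinite _)
  have hsub : insert v {w | (deleteVert G v).Adj u w} ⊆ {w | G.Adj u w} := by
    intro w hw
    rcases Set.mem_insert_iff.mp hw with rfl | hw'
    · exact huv
    · exact hw'.1
  have := Set.ncard_le_ncard hsub (Set.toFinite _)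
  rw [hins] at this
  exact this

private lemma tpn_ge_two {G : SimpleGraph V} {x a b : V} (hab : a ≠ b)
    (ha : G.Adj x a) (hb : G.Adj x b) (hda : 3 ≤ degN G a) (hdb : 3 ≤ degN G b) :
    2 ≤ tpn G x := by
  have hsub : ({a, b} : Set V) ⊆ {w | G.Adj x w ∧ 3 ≤ degN G w} := by
    intro w hw
    rcases Set.mem_insert_iff.mp hw with rfl | hw'
    · exact ⟨ha, hda⟩
    · rw [Set.mem_singleton_iff] at hw'
      subst hw'
      exact ⟨hb, hdb⟩
  have := Set.ncard_le_ncard hsub (Set.toFinite _)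
  rwa [Set.ncard_pair hab] at this

private lemma flip_ok [DecidableEq V] {G : SimpleGraph V} {v : V} {c : V → ℕ}
    (hc : IsColoring34 (deleteVert G v) c) {u : V} (huv : G.Adj v u)
    {i j : ℕ} (hij : (i = 3 ∧ j = 4) ∨ (i = 4 ∧ j = 3))
    (hsat : Saturated34 (deleteVert G v) c i u)
    (hdeg : degN G u ≤ 8) (hbad : degN G u ≤ 4 ∨ tpn G u ≤ 1)
    (hv3 : 3 ≤ degN G v) :
    IsColoring34 (deleteVert G v) (Function.update c u (7 - c u)) := by
  classical
  have hsum : i + j = 7 := by rcases hij with ⟨h1, h2⟩ | ⟨h1, h2⟩ <;> omega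
  have hi3 : 3 ≤ i := by rcases hij with ⟨h1, h2⟩ | ⟨h1, h2⟩ <;> omega
  have hj3 : 3 ≤ j := by rcases hij with ⟨h1, h2⟩ | ⟨h1, h2⟩ <;> omega
  have hj4 : j ≤ 4 := by rcases hij with ⟨h1, h2⟩ | ⟨h1, h2⟩ <;> omega
  have hine : i ≠ j := by omega
  have hcui : c u = i := hsat.1
  have hcnt : {w | (deleteVert G v).Adj u w ∧ c w = i}.ncard = i := hsat.2
  set c' := Function.update c u (7 - c u) with hc'def
  have hc'u : c' u = j := by
    rw [hc'def, Function.update_self, hcui]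
    omega
  have hc'ne : ∀ w, w ≠ u → c' w = c w := fun w hw => Function.update_of_ne hw _ _
  have key : {w | (deleteVert G v).Adj u w ∧ c w = i}.ncard
      + {w | (deleteVert G v).Adj u w ∧ c w = j}.ncard
      = {w | (deleteVert G v).Adj u w}.ncard := by
    rcases hij with ⟨rfl, rfl⟩ | ⟨rfl, rfl⟩
    · exact count_split hc.1 _
    · rw [Nat.add_comm]
      exact count_split hc.1 _
  have hT : {w | (deleteVert G v).Adj u w}.ncard + 1 ≤ degN G u := degbound huv.symm
  constructor
  · intro x
    by_cases hx : x = u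
    · subst hx
      rw [hc'u]
      omega
    · rw [hc'ne x hx]
      exact hc.1 x
  · intro x
    by_cases hxu : x = u
    · subst hxu
      rw [hc'u]
      have hseteq : {w | (deleteVert G v).Adj x w ∧ c' w = j}
          = {w | (deleteVert G v).Adj x w ∧ c w = j} := by
        ext w
        simp only [Set.mem_setOf_eq]
        constructor
        · rintro ⟨ha, hb⟩
          have hwu : w ≠ x := fun h => (deleteVert G v).loopless.irrefl x (h ▸ ha)
          rw [hc'ne w hwu] at hb
          exact ⟨ha, hb⟩
        · rintro ⟨ha, hb⟩
          have hwu : w ≠ x := fun h => (deleteVert G v).loopless.irrefl x (h ▸ ha)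
          rw [hc'ne w hwu]
          exact ⟨ha, hb⟩
      rw [hseteq]
      omega
    · rw [hc'ne x hxu]
      by_cases hkey : (deleteVert G v).Adj x u ∧ c x = j
      · obtain ⟨hadjxu, hcxj⟩ := hkey
        have hunotold : u ∉ {w | (deleteVert G v).Adj x w ∧ c w = c x} := by
          rintro ⟨-, h⟩
          rw [hcui, hcxj] at h
          exact hine h
        have hins : {w | (deleteVert G v).Adj x w ∧ c' w = c x}
            = insert u {w | (deleteVert G v).Adj x w ∧ c w = c x} := by
          ext w
          simp only [Set.mem_setOf_eq, Set.mem_insert_iff]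
          constructor
          · rintro ⟨ha, hb⟩
            by_cases hwu : w = u
            · exact Or.inl hwu
            · rw [hc'ne w hwu] at hb
              exact Or.inr ⟨ha, hb⟩
          · rintro (rfl | ⟨ha, hb⟩)
            · exact ⟨hadjxu, by rw [hc'u, hcxj]⟩
            · have hwu : w ≠ u := by
                rintro rfl
                rw [hcui, hcxj] at hb
                exact hine hb
              rw [hc'ne w hwu]
              exact ⟨ha, hb⟩
        have hold := hc.2 x
        have holdne : {w | (deleteVert G v).Adj x w ∧ c w = c x}.ncard ≠ c x := by
          intro holdeq
          have hxv : x ≠ v := hadjxu.2.1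
          have hGux : G.Adj u x := hadjxu.1.symm
          have hdx : 3 ≤ degN G x := by
            have h1 : {w | (deleteVert G v).Adj x w ∧ c w = c x}.ncard ≤ degN G x :=
              ncard_del_le_degN G v x _
            omega
          rcases hbad with hd4 | htpn
          · -- degN G u ≤ 4 : then i = 3 and all neighbors of u are colored 3
            have hAi : i ≤ {w | (deleteVert G v).Adj u w}.ncard := by
              have := Set.ncard_le_ncard
                (fun w (hw : w ∈ {w | (deleteVert G v).Adj u w ∧ c w = i}) => hw.1)
                (Set.toFinite {w | (deleteVert G v).Adj u w})
              omega
            have hAj0 : {w | (deleteVert G v).Adj u w ∧ c w = j}.ncard = 0 := by omega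
            have hxmem : x ∈ {w | (deleteVert G v).Adj u w ∧ c w = j} :=
              ⟨hadjxu.symm, hcxj⟩
            have := Set.ncard_eq_zero (Set.toFinite _) |>.mp hAj0
            rw [this] at hxmem
            exact hxmem
          · have h2 : 2 ≤ tpn G u :=
              tpn_ge_two (fun h => hxv h.symm) huv.symm hGux hv3 hdx
            omega
        rw [hins, Set.ncard_insert_of_notMem hunotold (Set.toFinite _)]
        omega
      · have hsub : {w | (deleteVert G v).Adj x w ∧ c' w = c x}
            ⊆ {w | (deleteVert G v).Adj x w ∧ c w = c x} := by
          rintro w ⟨ha, hb⟩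
          have hwu : w ≠ u := by
            rintro rfl
            rw [hc'u] at hb
            exact hkey ⟨ha, hb.symm⟩
          rw [hc'ne w hwu] at hb
          exact ⟨ha, hb⟩
        exact le_trans (Set.ncard_le_ncard hsub (Set.toFinite _)) (hc.2 x)

private lemma extend_ok {G : SimpleGraph V} {v : V} {c : V → ℕ}
    (hc : IsColoring34 (deleteVert G v) c) {i : ℕ} (hi : i = 3 ∨ i = 4)
    (hni : {w | G.Adj v w ∧ c w = i}.ncard ≤ i)
    (hnosat : ∀ x, G.Adj v x → ¬ Saturated34 (deleteVert G v) c i x) :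
    Colorable34 G := by
  classical
  set c₀ := Function.update c v i with hc₀def
  have hc₀v : c₀ v = i := by rw [hc₀def, Function.update_self]
  have hc₀ne : ∀ w, w ≠ v → c₀ w = c w := fun w hw => Function.update_of_ne hw _ _
  refine ⟨c₀, ?_, ?_⟩
  · intro x
    by_cases hx : x = v
    · subst hx
      rw [hc₀v]
      exact hi
    · rw [hc₀ne x hx]
      exact hc.1 x
  · intro x
    by_cases hx : x = v
    · subst hx
      rw [hc₀v]
      have hseteq : {w | G.Adj x w ∧ c₀ w = i} = {w | G.Adj x w ∧ c w = i} := by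
        ext w
        simp only [Set.mem_setOf_eq]
        constructor
        · rintro ⟨ha, hb⟩
          have hwv : w ≠ x := fun h => G.loopless.irrefl x (h ▸ ha)
          rw [hc₀ne w hwv] at hb
          exact ⟨ha, hb⟩
        · rintro ⟨ha, hb⟩
          have hwv : w ≠ x := fun h => G.loopless.irrefl x (h ▸ ha)
          rw [hc₀ne w hwv]
          exact ⟨ha, hb⟩
      rw [hseteq]
      exact hni
    · rw [hc₀ne x hx]
      have hold := hc.2 x
      by_cases hkey : G.Adj x v ∧ c x = i
      · obtain ⟨hadjxv, hcxi⟩ := hkey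
        have hvnotold : v ∉ {w | (deleteVert G v).Adj x w ∧ c w = c x} :=
          fun h => h.1.2.2 rfl
        have hins : {w | G.Adj x w ∧ c₀ w = c x}
            = insert v {w | (deleteVert G v).Adj x w ∧ c w = c x} := by
          ext w
          simp only [Set.mem_setOf_eq, Set.mem_insert_iff]
          constructor
          · rintro ⟨ha, hb⟩
            by_cases hwv : w = v
            · exact Or.inl hwv
            · rw [hc₀ne w hwv] at hb
              exact Or.inr ⟨⟨ha, hx, hwv⟩, hb⟩
          · rintro (rfl | ⟨ha, hb⟩)
            · exact ⟨hadjxv, by rw [hc₀v, hcxi]⟩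
            · have hwv : w ≠ v := ha.2.2
              rw [hc₀ne w hwv]
              exact ⟨ha.1, hb⟩
        have hnots := hnosat x hadjxv.symm
        have holdne : {w | (deleteVert G v).Adj x w ∧ c w = c x}.ncard ≠ c x := by
          intro holdeq
          apply hnots
          refine ⟨hcxi, ?_⟩
          rw [← hcxi]
          exact holdeq
        rw [hins, Set.ncard_insert_of_notMem hvnotold (Set.toFinite _)]
        have hle := hc.2 x
        omega
      · have hseteq : {w | G.Adj x w ∧ c₀ w = c x}
            = {w | (deleteVert G v).Adj x w ∧ c w = c x} := by
          ext w
          simp only [Set.mem_setOf_eq]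
          constructor
          · rintro ⟨ha, hb⟩
            have hwv : w ≠ v := by
              rintro rfl
              rw [hc₀v] at hb
              exact hkey ⟨ha, hb.symm⟩
            rw [hc₀ne w hwv] at hb
            exact ⟨⟨ha, hx, hwv⟩, hb⟩
          · rintro ⟨ha, hb⟩
            have hwv : w ≠ v := ha.2.2
            rw [hc₀ne w hwv]
            exact ⟨ha.1, hb⟩
        rw [hseteq]
        exact hc.2 x

private lemma main_ind {G : SimpleGraph V} {v : V} (hv3 : 3 ≤ degN G v)
    {i j : ℕ} (hij : (i = 3 ∧ j = 4) ∨ (i = 4 ∧ j = 3)) :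
    ∀ n : ℕ, ∀ c : V → ℕ, IsColoring34 (deleteVert G v) c →
      {w | G.Adj v w ∧ c w = i}.ncard ≤ i →
      {x | G.Adj v x ∧ Saturated34 (deleteVert G v) c i x}.ncard ≤ n →
      (∀ x, G.Adj v x → Saturated34 (deleteVert G v) c i x →
        degN G x ≤ 8 ∧ (degN G x ≤ 4 ∨ tpn G x ≤ 1)) →
      Colorable34 G := by
  classical
  have hi : i = 3 ∨ i = 4 := by rcases hij with ⟨h1, h2⟩ | ⟨h1, h2⟩ <;> omega
  have hine : i ≠ j := by rcases hij with ⟨h1, h2⟩ | ⟨h1, h2⟩ <;> omega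
  intro n
  induction n with
  | zero =>
    intro c hc hni hS hbad
    apply extend_ok hc hi hni
    intro x hx hxsat
    have hmem : x ∈ {x | G.Adj v x ∧ Saturated34 (deleteVert G v) c i x} := ⟨hx, hxsat⟩
    have hempty : {x | G.Adj v x ∧ Saturated34 (deleteVert G v) c i x} = ∅ :=
      (Set.ncard_eq_zero (Set.toFinite _)).mp (Nat.le_zero.mp hS)
    rw [hempty] at hmem
    exact hmem
  | succ n ih =>
    intro c hc hni hS hbad
    by_cases hS0 : {x | G.Adj v x ∧ Saturated34 (deleteVert G v) c i x}.ncard = 0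
    · apply extend_ok hc hi hni
      intro x hx hxsat
      have hmem : x ∈ {x | G.Adj v x ∧ Saturated34 (deleteVert G v) c i x} := ⟨hx, hxsat⟩
      have hempty : {x | G.Adj v x ∧ Saturated34 (deleteVert G v) c i x} = ∅ :=
        (Set.ncard_eq_zero (Set.toFinite _)).mp hS0
      rw [hempty] at hmem
      exact hmem
    · obtain ⟨u, humem⟩ := Set.nonempty_of_ncard_ne_zero hS0
      obtain ⟨huadj, husat⟩ := humem
      obtain ⟨hd8, hbadu⟩ := hbad u huadj husat
      have hc' := flip_ok hc huadj hij husat hd8 hbadu hv3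
      set c' := Function.update c u (7 - c u) with hc'def
      have hc'u : c' u = j := by
        rw [hc'def, Function.update_self, husat.1]
        rcases hij with ⟨h1, h2⟩ | ⟨h1, h2⟩ <;> omega
      have hc'ne : ∀ w, w ≠ u → c' w = c w := fun w hw => Function.update_of_ne hw _ _
      have hni' : {w | G.Adj v w ∧ c' w = i}.ncard ≤ i := by
        refine le_trans (Set.ncard_le_ncard ?_ (Set.toFinite _)) hni
        rintro w ⟨ha, hb⟩
        have hwu : w ≠ u := by
          rintro rfl
          rw [hc'u] at hb
          exact hine hb.symm
        rw [hc'ne w hwu] at hb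
        exact ⟨ha, hb⟩
      have hSsub : {x | G.Adj v x ∧ Saturated34 (deleteVert G v) c' i x}
          ⊆ {x | G.Adj v x ∧ Saturated34 (deleteVert G v) c i x} \ {u} := by
        rintro x ⟨hxadj, hxsat'⟩
        have hxcol : c' x = i := hxsat'.1
        have hxcnt : {w | (deleteVert G v).Adj x w ∧ c' w = i}.ncard = i := hxsat'.2
        have hxu : x ≠ u := by
          rintro rfl
          rw [hc'u] at hxcol
          exact hine hxcol.symm
        have hcx : c x = i := by rw [← hc'ne x hxu]; exact hxcol
        have hsubset : {w | (deleteVert G v).Adj x w ∧ c' w = i}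
            ⊆ {w | (deleteVert G v).Adj x w ∧ c w = i} := by
          rintro w ⟨ha, hb⟩
          have hwu : w ≠ u := by
            rintro rfl
            rw [hc'u] at hb
            exact hine hb.symm
          rw [hc'ne w hwu] at hb
          exact ⟨ha, hb⟩
        have h1 : i ≤ {w | (deleteVert G v).Adj x w ∧ c w = i}.ncard := by
          have := Set.ncard_le_ncard hsubset (Set.toFinite _)
          omega
        have h2 : {w | (deleteVert G v).Adj x w ∧ c w = i}.ncard ≤ i := by
          have := hc.2 x
          rw [hcx] at this
          exact this
        refine Set.mem_diff_singleton.mpr ⟨⟨hxadj, hcx, le_antisymm h2 h1⟩, hxu⟩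
      have hS' : {x | G.Adj v x ∧ Saturated34 (deleteVert G v) c' i x}.ncard ≤ n := by
        have hmem : u ∈ {x | G.Adj v x ∧ Saturated34 (deleteVert G v) c i x} :=
          ⟨huadj, husat⟩
        have hdiff : ({x | G.Adj v x ∧ Saturated34 (deleteVert G v) c i x} \ {u}).ncard
            = {x | G.Adj v x ∧ Saturated34 (deleteVert G v) c i x}.ncard - 1 :=
          Set.ncard_diff_singleton_of_mem hmem
        have hle := Set.ncard_le_ncard hSsub (Set.toFinite _)
        omega
      have hbad' : ∀ x, G.Adj v x → Saturated34 (deleteVert G v) c' i x →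
          degN G x ≤ 8 ∧ (degN G x ≤ 4 ∨ tpn G x ≤ 1) := by
        intro x hx hxs
        have := hSsub ⟨hx, hxs⟩
        exact hbad x hx this.1.2
      exact ih c' hc' hni' hS' hbad'

end Stmt7Helpers

/-- If `G` is not (3,4)-colorable, `deg v ∈ {6, 7, 8}`, and `c` is a
(3,4)-coloring of `G − v`, then `v` has a saturated neighbor that is either a
`9⁺`-vertex or a `5⁺`-vertex with at least two 3^+-neighbors. -/
theorem stmt_7 {V : Type*} [Fintype V] (G : SimpleGraph V) (v : V)
    (hG : ¬ Colorable34 G) (hv : degN G v = 6 ∨ degN G v = 7 ∨ degN G v = 8)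
    (c : V → ℕ) (hc : IsColoring34 (deleteVert G v) c) :
    ∃ u : V, G.Adj v u ∧
      (Saturated34 (deleteVert G v) c 3 u ∨ Saturated34 (deleteVert G v) c 4 u) ∧
      (9 ≤ degN G u ∨ (5 ≤ degN G u ∧ 2 ≤ tpn G u)) := by
  classical
  by_contra hcon
  have hbadAll : ∀ x, G.Adj v x →
      (Saturated34 (deleteVert G v) c 3 x ∨ Saturated34 (deleteVert G v) c 4 x) →
      degN G x ≤ 8 ∧ (degN G x ≤ 4 ∨ tpn G x ≤ 1) := by
    intro x h1 h2
    have hnot : ¬ (9 ≤ degN G x ∨ (5 ≤ degN G x ∧ 2 ≤ tpn G x)) :=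
      fun hg => hcon ⟨x, h1, h2, hg⟩
    push_neg at hnot
    omega
  have hv3 : 3 ≤ degN G v := by rcases hv with h | h | h <;> omega
  have hv8 : degN G v ≤ 8 := by rcases hv with h | h | h <;> omega
  have hsplit : {w | G.Adj v w ∧ c w = 3}.ncard + {w | G.Adj v w ∧ c w = 4}.ncard
      = {w | G.Adj v w}.ncard := count_split hc.1 _
  have hdegv : {w | G.Adj v w}.ncard = degN G v := rfl
  by_cases h4 : {w | G.Adj v w ∧ c w = 4}.ncard ≤ 4
  · exact hG (main_ind hv3 (Or.inr ⟨rfl, rfl⟩) _ c hc h4 le_rfl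
      (fun x hx hs => hbadAll x hx (Or.inr hs)))
  · have h3 : {w | G.Adj v w ∧ c w = 3}.ncard ≤ 3 := by omega
    exact hG (main_ind hv3 (Or.inl ⟨rfl, rfl⟩) _ c hc h3 le_rfl
      (fun x hx hs => hbadAll x hx (Or.inl hs)))
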